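/- arXiv:1409.1288 — 2 statements merged into one kernel-verified Lean document; each statement's English description precedes it below -/
import Mathlib

section
/- Suppose F is Lipschitz with constant M̄. Let k₀ > 0, T > 0, and (γₙ), γ in L¹_loc([0,∞)) with γₙ ⇀ γ weakly in L¹([0,T]). Let κ = k(·;k₀,γ) and κₙ = k(·;k₀,γₙ) solve the state equation k' = F(k) − control, k(0)=k₀. Then for every t ∈ [0,T]: limsup_n κₙ(t) ≤ κ(t). In particular, if each κₙ ≥ 0 on [0,T], then κ ≥ 0 on [0,T]. -/
open MeasureTheory

/-- Weak convergence in `L¹(S)`: integrals against every bounded measurable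
test function converge. -/
def WeakL1On (fn : ℕ → ℝ → ℝ) (f : ℝ → ℝ) (S : Set ℝ) : Prop :=
  ∀ g : ℝ → ℝ, Measurable g → (∃ C, ∀ x, |g x| ≤ C) →
    Filter.Tendsto (fun n => ∫ x in S, g x * fn n x) Filter.atTop
      (nhds (∫ x in S, g x * f x))

open Filter BoundedContinuousFunction

lemma weak_uniform_bound {T : ℝ} (hT : 0 < T) (h : ℕ → ℝ → ℝ)
    (hint : ∀ n, IntegrableOn (h n) (Set.Icc 0 T))
    (hconv : ∀ g : ℝ → ℝ, Measurable g → (∃ C, ∀ x, |g x| ≤ C) →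
      Tendsto (fun n => ∫ x in Set.Icc (0:ℝ) T, g x * h n x) atTop (nhds 0)) :
    ∃ C, ∀ n, ∀ s ∈ Set.Icc (0:ℝ) T, |∫ x in Set.Icc (0:ℝ) s, h n x| ≤ C := by
  have hmul : ∀ (n) (g : ℝ →ᵇ ℝ),
      Integrable (fun x => g x * h n x) (volume.restrict (Set.Icc (0:ℝ) T)) := fun n g =>
    (hint n).bdd_mul g.continuous.aestronglyMeasurable (Filter.Eventually.of_forall fun x => g.norm_coe_le_norm x)
  let L : ℕ → (ℝ →ᵇ ℝ) →L[ℝ] ℝ := fun n =>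
    LinearMap.mkContinuous
      { toFun := fun g => ∫ x in Set.Icc (0:ℝ) T, g x * h n x
        map_add' := by
          intro g1 g2
          simp only [BoundedContinuousFunction.coe_add, Pi.add_apply, add_mul]
          exact integral_add (hmul n g1) (hmul n g2)
        map_smul' := by
          intro c g
          simp only [BoundedContinuousFunction.coe_smul, Pi.smul_apply, smul_eq_mul,
            RingHom.id_apply, mul_assoc]
          exact integral_const_mul c _ }
      (∫ x in Set.Icc (0:ℝ) T, |h n x|)
      (by
        intro g
        simp only [LinearMap.coe_mk, AddHom.coe_mk]
        calc ‖∫ x in Set.Icc (0:ℝ) T, g x * h n x‖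
            ≤ ∫ x in Set.Icc (0:ℝ) T, ‖g x * h n x‖ := norm_integral_le_integral_norm _
          _ ≤ ∫ x in Set.Icc (0:ℝ) T, |h n x| * ‖g‖ := by
              apply integral_mono ((hmul n g).norm) (((hint n).abs).mul_const ‖g‖)
              intro x
              simp only [norm_mul, Real.norm_eq_abs]
              exact mul_le_mul_of_nonneg_right (by exact g.norm_coe_le_norm x) (abs_nonneg _)
                |>.trans_eq (mul_comm _ _)
          _ = (∫ x in Set.Icc (0:ℝ) T, |h n x|) * ‖g‖ := integral_mul_const _ _)
  have hpt : ∀ g : ℝ →ᵇ ℝ, ∃ C, ∀ n, ‖L n g‖ ≤ C := by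
    intro g
    have hg : Tendsto (fun n => ∫ x in Set.Icc (0:ℝ) T, g x * h n x) atTop (nhds 0) :=
      hconv g g.continuous.measurable ⟨‖g‖, fun x => by simpa using g.norm_coe_le_norm x⟩
    have := (hg.norm).bddAbove_range
    obtain ⟨C, hC⟩ := this
    exact ⟨C, fun n => hC ⟨n, rfl⟩⟩
  obtain ⟨C', hC'⟩ := banach_steinhaus hpt
  refine ⟨C', fun n s hs => ?_⟩
  have hC'0 : 0 ≤ C' := le_trans (norm_nonneg _) (hC' 0)
  -- continuous approximations of the indicator of Iic s = Icc 0 s on [0,T]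
  set cl : ℕ → ℝ → ℝ := fun k x => max 0 (min 1 ((s - x) * (k+1) + 1)) with hcl
  have hcl0 : ∀ k x, 0 ≤ cl k x := fun k x => le_max_left _ _
  have hcl1 : ∀ k x, cl k x ≤ 1 := fun k x => max_le zero_le_one (min_le_left _ _)
  have hclcont : ∀ k, Continuous (cl k) := fun k => by
    apply continuous_const.max (continuous_const.min _)
    fun_prop
  set gk : ℕ → ℝ →ᵇ ℝ := fun k =>
    BoundedContinuousFunction.ofNormedAddCommGroup (cl k) (hclcont k) 1
      (fun x => by rw [Real.norm_eq_abs, abs_le]; exact ⟨by linarith [hcl0 k x], hcl1 k x⟩)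
    with hgk
  have hgkapp : ∀ k x, gk k x = cl k x := fun k x => rfl
  have hnormgk : ∀ k, ‖gk k‖ ≤ 1 := fun k =>
    BoundedContinuousFunction.norm_ofNormedAddCommGroup_le _ zero_le_one _
  -- pointwise convergence to the indicator
  have hptw : ∀ x : ℝ, Tendsto (fun k => gk k x) atTop
      (nhds ((Set.Iic s).indicator (fun _ => (1:ℝ)) x)) := by
    intro x
    rcases le_or_gt x s with hx | hx
    · have : ∀ k ≥ 0, gk k x = (Set.Iic s).indicator (fun _ => (1:ℝ)) x := by
        intro k _
        have h1 : (1:ℝ) ≤ (s - x) * (k+1) + 1 := by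
          have h0 : (0:ℝ) ≤ (s - x) * (k+1) :=
            mul_nonneg (by linarith) (by positivity)
          linarith
        rw [hgkapp, hcl]
        simp only []
        rw [min_eq_left h1, max_eq_right zero_le_one,
          Set.indicator_of_mem (Set.mem_Iic.2 hx)]
      exact tendsto_atTop_of_eventually_const this
    · have : ∀ k ≥ ⌈1/(x - s)⌉₊, gk k x = (Set.Iic s).indicator (fun _ => (1:ℝ)) x := by
        intro k hk
        have hxs : 0 < x - s := by linarith
        have h1 : 1/(x - s) ≤ (k:ℝ) + 1 := by
          calc 1/(x-s) ≤ (⌈1/(x-s)⌉₊ : ℝ) := Nat.le_ceil _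
            _ ≤ (k:ℝ) := by exact_mod_cast hk
            _ ≤ (k:ℝ) + 1 := by linarith
        have h2 : (1:ℝ) ≤ (x - s) * ((k:ℝ)+1) := by
          rw [div_le_iff₀ hxs] at h1
          nlinarith
        have h3 : (s - x) * ((k:ℝ)+1) + 1 ≤ 0 := by nlinarith
        rw [hgkapp, hcl]
        simp only []
        rw [min_eq_right (by linarith), max_eq_left h3,
          Set.indicator_of_notMem (by simpa using hx)]
      exact tendsto_atTop_of_eventually_const this
  -- dominated convergence in k
  have hdct : Tendsto (fun k => L n (gk k)) atTop
      (nhds (∫ x in Set.Icc (0:ℝ) T, (Set.Iic s).indicator (fun _ => (1:ℝ)) x * h n x)) := by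
    apply tendsto_integral_of_dominated_convergence (fun x => |h n x|)
      (fun k => (hmul n (gk k)).aestronglyMeasurable) ((hint n).abs)
    · intro k
      filter_upwards with x
      rw [norm_mul, Real.norm_eq_abs, Real.norm_eq_abs]
      have : |(gk k) x| ≤ 1 := by
        have := (gk k).norm_coe_le_norm x
        rw [Real.norm_eq_abs] at this
        exact this.trans (hnormgk k)
      nlinarith [abs_nonneg (h n x), abs_nonneg ((gk k) x)]
    · filter_upwards with x
      exact (hptw x).mul_const _
  -- identify the limit
  have hid : ∫ x in Set.Icc (0:ℝ) T, (Set.Iic s).indicator (fun _ => (1:ℝ)) x * h n x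
      = ∫ x in Set.Icc (0:ℝ) s, h n x := by
    have e1 : (fun x => (Set.Iic s).indicator (fun _ => (1:ℝ)) x * h n x)
        = (Set.Iic s).indicator (h n) := by
      funext x
      by_cases hx : x ∈ Set.Iic s
      · rw [Set.indicator_of_mem hx, Set.indicator_of_mem hx, one_mul]
      · rw [Set.indicator_of_notMem hx, Set.indicator_of_notMem hx, zero_mul]
    have e2 : Set.Iic s ∩ Set.Icc 0 T = Set.Icc (0:ℝ) s := by
      ext x
      simp only [Set.mem_inter_iff, Set.mem_Iic, Set.mem_Icc]
      constructor
      · rintro ⟨h1, h2, _⟩; exact ⟨h2, h1⟩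
      · rintro ⟨h1, h2⟩; exact ⟨h2, h1, h2.trans hs.2⟩
    rw [e1, integral_indicator measurableSet_Iic,
      Measure.restrict_restrict measurableSet_Iic, e2]
  rw [hid] at hdct
  apply le_of_tendsto hdct.abs
  filter_upwards with k
  calc |L n (gk k)| ≤ ‖L n‖ * ‖gk k‖ := (L n).le_opNorm (gk k)
    _ ≤ C' * 1 := mul_le_mul (hC' n) (hnormgk k) (norm_nonneg _) hC'0
    _ = C' := mul_one _

theorem stmt17 (F γ : ℝ → ℝ) (γn : ℕ → ℝ → ℝ) (κ : ℝ → ℝ) (κn : ℕ → ℝ → ℝ)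
    (M k₀ T : ℝ) (hM : 0 ≤ M) (hk₀ : 0 < k₀) (hT : 0 < T)
    (hLip : ∀ x y, |F x - F y| ≤ M * |x - y|)
    (hγ : LocallyIntegrableOn γ (Set.Ici 0))
    (hγn : ∀ n, LocallyIntegrableOn (γn n) (Set.Ici 0))
    (hweak : WeakL1On γn γ (Set.Icc 0 T))
    (hκcont : ContinuousOn κ (Set.Ici 0))
    (hκsol : ∀ t ≥ (0:ℝ), κ t = k₀ + ∫ s in (0:ℝ)..t, (F (κ s) - γ s))
    (hκncont : ∀ n, ContinuousOn (κn n) (Set.Ici 0))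
    (hκnsol : ∀ n, ∀ t ≥ (0:ℝ), κn n t = k₀ + ∫ s in (0:ℝ)..t, (F (κn n s) - γn n s)) :
    (∀ t ∈ Set.Icc (0:ℝ) T, Filter.limsup (fun n => κn n t) Filter.atTop ≤ κ t) ∧
    ((∀ n, ∀ t ∈ Set.Icc (0:ℝ) T, 0 ≤ κn n t) → ∀ t ∈ Set.Icc (0:ℝ) T, 0 ≤ κ t) := by
  classical
  -- continuity of F
  have hFcont : Continuous F := by
    refine (LipschitzWith.of_dist_le_mul (K := Real.toNNReal M) (f := F) ?_).continuous
    intro x y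
    rw [Real.dist_eq, Real.dist_eq, Real.coe_toNNReal M hM]
    exact hLip x y
  -- extended (clamped) versions of κ, κn, continuous on all of ℝ
  set κ' : ℝ → ℝ := fun s => κ (max s 0) with hκ'def
  set κn' : ℕ → ℝ → ℝ := fun n s => κn n (max s 0) with hκn'def
  have hκ'c : Continuous κ' :=
    hκcont.comp_continuous (continuous_id.max continuous_const) (fun x => Set.mem_Ici.2 (le_max_right _ _))
  have hκn'c : ∀ n, Continuous (κn' n) := fun n =>
    (hκncont n).comp_continuous (continuous_id.max continuous_const) (fun x => Set.mem_Ici.2 (le_max_right _ _))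
  have hκ'eq : ∀ s : ℝ, 0 ≤ s → κ' s = κ s := fun s hs => by
    simp only [hκ'def, max_eq_left hs]
  have hκn'eq : ∀ n, ∀ s : ℝ, 0 ≤ s → κn' n s = κn n s := fun n s hs => by
    simp only [hκn'def, max_eq_left hs]
  -- integrability
  have hγint : IntegrableOn γ (Set.Icc 0 T) :=
    hγ.integrableOn_compact_subset (fun x hx => hx.1) isCompact_Icc
  have hγnint : ∀ n, IntegrableOn (γn n) (Set.Icc 0 T) := fun n =>
    (hγn n).integrableOn_compact_subset (fun x hx => hx.1) isCompact_Icc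
  have hγii : ∀ s ∈ Set.Icc (0:ℝ) T, IntervalIntegrable γ volume 0 s := fun s hs =>
    (hγint.mono_set (by rw [Set.uIcc_of_le hs.1]; exact Set.Icc_subset_Icc_right hs.2)).intervalIntegrable
  have hγnii : ∀ n, ∀ s ∈ Set.Icc (0:ℝ) T, IntervalIntegrable (γn n) volume 0 s := fun n s hs =>
    ((hγnint n).mono_set (by rw [Set.uIcc_of_le hs.1]; exact Set.Icc_subset_Icc_right hs.2)).intervalIntegrable
  -- the primitive of γ - γn
  set E : ℕ → ℝ → ℝ := fun n s => ∫ r in (0:ℝ)..s, (γ r - γn n r) with hEdef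
  have hEcont : ∀ n, ContinuousOn (E n) (Set.Icc 0 T) := by
    intro n
    have := intervalIntegral.continuousOn_primitive_interval
      (f := fun r => γ r - γn n r) (a := 0) (b := T) (μ := volume)
      (by rw [Set.uIcc_of_le hT.le]; exact hγint.sub (hγnint n))
    rwa [Set.uIcc_of_le hT.le] at this
  -- uniform bound on E via Banach–Steinhaus
  obtain ⟨C, hC⟩ : ∃ C, ∀ n, ∀ s ∈ Set.Icc (0:ℝ) T,
      |∫ x in Set.Icc (0:ℝ) s, (γ x - γn n x)| ≤ C := by
    apply weak_uniform_bound hT (fun n x => γ x - γn n x) (fun n => hγint.sub (hγnint n))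
    intro g hm ⟨Cg, hCg⟩
    have hgγ : Integrable (fun x => g x * γ x) (volume.restrict (Set.Icc (0:ℝ) T)) :=
      hγint.bdd_mul (c := Cg) hm.aestronglyMeasurable (Filter.Eventually.of_forall fun x => by rw [Real.norm_eq_abs]; exact hCg x)
    have hgγn : ∀ n, Integrable (fun x => g x * γn n x) (volume.restrict (Set.Icc (0:ℝ) T)) :=
      fun n => (hγnint n).bdd_mul (c := Cg) hm.aestronglyMeasurable
        (Filter.Eventually.of_forall fun x => by rw [Real.norm_eq_abs]; exact hCg x)
    have heq : ∀ n, ∫ x in Set.Icc (0:ℝ) T, g x * (γ x - γn n x)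
        = (∫ x in Set.Icc (0:ℝ) T, g x * γ x) - ∫ x in Set.Icc (0:ℝ) T, g x * γn n x := by
      intro n
      rw [← integral_sub hgγ (hgγn n)]
      congr 1
      funext x
      ring
    have h0 := Filter.Tendsto.const_sub (∫ x in Set.Icc (0:ℝ) T, g x * γ x)
      (hweak g hm ⟨Cg, hCg⟩)
    rw [sub_self] at h0
    exact h0.congr (fun n => (heq n).symm)
  have hEb : ∀ n, ∀ s ∈ Set.Icc (0:ℝ) T, |E n s| ≤ C := by
    intro n s hs
    have : E n s = ∫ x in Set.Icc (0:ℝ) s, (γ x - γn n x) := by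
      rw [hEdef]
      simp only []
      rw [intervalIntegral.integral_of_le hs.1, ← integral_Icc_eq_integral_Ioc]
    rw [this]
    exact hC n s hs
  -- pointwise convergence of E to 0
  have hE0 : ∀ s ∈ Set.Icc (0:ℝ) T, Filter.Tendsto (fun n => E n s) atTop (nhds 0) := by
    intro s hs
    set g : ℝ → ℝ := (Set.Icc (0:ℝ) s).indicator (fun _ => (1:ℝ)) with hgdef
    have hm : Measurable g := measurable_const.indicator measurableSet_Icc
    have hb : ∀ x, |g x| ≤ 1 := by
      intro x
      rw [hgdef]
      by_cases hx : x ∈ Set.Icc (0:ℝ) s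
      · rw [Set.indicator_of_mem hx]; norm_num
      · rw [Set.indicator_of_notMem hx]; norm_num
    have hind : ∀ f : ℝ → ℝ, ∫ x in Set.Icc (0:ℝ) T, g x * f x = ∫ x in Set.Icc (0:ℝ) s, f x := by
      intro f
      have e1 : (fun x => g x * f x) = (Set.Icc (0:ℝ) s).indicator f := by
        funext x
        rw [hgdef]
        by_cases hx : x ∈ Set.Icc (0:ℝ) s
        · rw [Set.indicator_of_mem hx, Set.indicator_of_mem hx, one_mul]
        · rw [Set.indicator_of_notMem hx, Set.indicator_of_notMem hx, zero_mul]
      have e2 : Set.Icc (0:ℝ) s ∩ Set.Icc 0 T = Set.Icc (0:ℝ) s :=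
        Set.inter_eq_left.2 (Set.Icc_subset_Icc_right hs.2)
      rw [e1, integral_indicator measurableSet_Icc,
        Measure.restrict_restrict measurableSet_Icc, e2]
    have h1 := hweak g hm ⟨1, hb⟩
    rw [hind γ] at h1
    have h1' : ∀ n, ∫ x in Set.Icc (0:ℝ) T, g x * γn n x = ∫ x in Set.Icc (0:ℝ) s, γn n x :=
      fun n => hind (γn n)
    have h2 := Filter.Tendsto.const_sub (∫ x in Set.Icc (0:ℝ) s, γ x) h1
    rw [sub_self] at h2
    apply h2.congr
    intro n
    rw [h1', hEdef]
    simp only []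
    rw [intervalIntegral.integral_sub (hγii s hs) (hγnii n s hs),
      intervalIntegral.integral_of_le hs.1, intervalIntegral.integral_of_le hs.1,
      ← integral_Icc_eq_integral_Ioc, ← integral_Icc_eq_integral_Ioc]
  -- clamped version of E
  set Et : ℕ → ℝ → ℝ := fun n s => E n (max 0 (min s T)) with hEtdef
  have hclmem : ∀ s : ℝ, max 0 (min s T) ∈ Set.Icc (0:ℝ) T :=
    fun s => ⟨le_max_left _ _, max_le hT.le (min_le_right _ _)⟩
  have hEtc : ∀ n, Continuous (Et n) := fun n =>
    (hEcont n).comp_continuous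
      (continuous_const.max (continuous_id.min continuous_const)) hclmem
  have hEteq : ∀ n, ∀ s ∈ Set.Icc (0:ℝ) T, Et n s = E n s := by
    intro n s hs
    simp only [hEtdef]
    rw [min_eq_left hs.2, max_eq_right hs.1]
  -- the main pointwise convergence
  have htend : ∀ t ∈ Set.Icc (0:ℝ) T, Filter.Tendsto (fun n => κn n t) atTop (nhds (κ t)) := by
    intro t ht
    have hIccsub : Set.Icc (0:ℝ) t ⊆ Set.Icc (0:ℝ) T := Set.Icc_subset_Icc_right ht.2
    -- key estimate
    have key : ∀ n, |κn n t - κ t| ≤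
        Real.exp (M * T) * (∫ s in (0:ℝ)..t, M * |Et n s|) + |E n t| := by
      intro n
      set q : ℝ → ℝ := fun r => F (κn' n r) - F (κ' r) with hqdef
      have hqc : Continuous q := (hFcont.comp (hκn'c n)).sub (hFcont.comp hκ'c)
      set z : ℝ → ℝ := fun r => ∫ s in (0:ℝ)..r, q s with hzdef
      have hz' : ∀ r, HasDerivAt z (q r) r := fun r =>
        intervalIntegral.integral_hasDerivAt_right (hqc.intervalIntegrable _ _)
          (hqc.stronglyMeasurableAtFilter _ _) hqc.continuousAt
      have hzc : Continuous z := continuous_iff_continuousAt.2 fun r => (hz' r).continuousAt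
      -- difference of solutions
      have hu : ∀ s ∈ Set.Icc (0:ℝ) t, κn n s - κ s = z s + E n s := by
        intro s hs
        have hsT : s ∈ Set.Icc (0:ℝ) T := hIccsub hs
        have hFκn : IntervalIntegrable (fun r => F (κn' n r)) volume 0 s :=
          (hFcont.comp (hκn'c n)).intervalIntegrable _ _
        have hFκ : IntervalIntegrable (fun r => F (κ' r)) volume 0 s :=
          (hFcont.comp hκ'c).intervalIntegrable _ _
        have i1 : ∫ r in (0:ℝ)..s, (F (κn n r) - γn n r)
            = (∫ r in (0:ℝ)..s, F (κn' n r)) - ∫ r in (0:ℝ)..s, γn n r := by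
          rw [← intervalIntegral.integral_sub hFκn (hγnii n s hsT)]
          apply intervalIntegral.integral_congr
          intro x hx
          rw [Set.uIcc_of_le hs.1] at hx
          show F (κn n x) - γn n x = F (κn' n x) - γn n x
          rw [hκn'eq n x hx.1]
        have i2 : ∫ r in (0:ℝ)..s, (F (κ r) - γ r)
            = (∫ r in (0:ℝ)..s, F (κ' r)) - ∫ r in (0:ℝ)..s, γ r := by
          rw [← intervalIntegral.integral_sub hFκ (hγii s hsT)]
          apply intervalIntegral.integral_congr
          intro x hx
          rw [Set.uIcc_of_le hs.1] at hx
          show F (κ x) - γ x = F (κ' x) - γ x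
          rw [hκ'eq x hx.1]
        have i3 : z s = (∫ r in (0:ℝ)..s, F (κn' n r)) - ∫ r in (0:ℝ)..s, F (κ' r) := by
          rw [hzdef]
          simp only []
          rw [← intervalIntegral.integral_sub hFκn hFκ]
        have i4 : E n s = (∫ r in (0:ℝ)..s, γ r) - ∫ r in (0:ℝ)..s, γn n r := by
          rw [hEdef]
          simp only []
          rw [← intervalIntegral.integral_sub (hγii s hsT) (hγnii n s hsT)]
        rw [hκnsol n s hs.1, hκsol s hs.1, i1, i2, i3, i4]
        ring
      -- primitives
      set W : ℝ → ℝ := fun r => ∫ s in (0:ℝ)..r, M * |z s| with hWdef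
      set Bf : ℝ → ℝ := fun r => ∫ s in (0:ℝ)..r, M * |Et n s| with hBfdef
      have hWintc : Continuous (fun s => M * |z s|) := continuous_const.mul hzc.abs
      have hBintc : Continuous (fun s => M * |Et n s|) := continuous_const.mul (hEtc n).abs
      have hW' : ∀ r, HasDerivAt W (M * |z r|) r := fun r =>
        intervalIntegral.integral_hasDerivAt_right (hWintc.intervalIntegrable _ _)
          (hWintc.stronglyMeasurableAtFilter _ _) hWintc.continuousAt
      have hB' : ∀ r, HasDerivAt Bf (M * |Et n r|) r := fun r =>
        intervalIntegral.integral_hasDerivAt_right (hBintc.intervalIntegrable _ _)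
          (hBintc.stronglyMeasurableAtFilter _ _) hBintc.continuousAt
      have hWc : Continuous W := continuous_iff_continuousAt.2 fun r => (hW' r).continuousAt
      have hBc : Continuous Bf := continuous_iff_continuousAt.2 fun r => (hB' r).continuousAt
      -- the basic integral inequality
      have hineq : ∀ r ∈ Set.Icc (0:ℝ) t, |z r| ≤ W r + Bf r := by
        intro r hr
        have h1 : |z r| ≤ ∫ s in (0:ℝ)..r, |q s| := by
          rw [hzdef]
          exact intervalIntegral.abs_integral_le_integral_abs hr.1
        have h2 : ∫ s in (0:ℝ)..r, |q s| ≤ ∫ s in (0:ℝ)..r, (M * |z s| + M * |Et n s|) := by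
          apply intervalIntegral.integral_mono_on hr.1
            (hqc.abs.intervalIntegrable _ _)
            ((hWintc.add hBintc).intervalIntegrable _ _)
          intro x hx
          have hxt : x ∈ Set.Icc (0:ℝ) t := ⟨hx.1, hx.2.trans hr.2⟩
          have hxT : x ∈ Set.Icc (0:ℝ) T := hIccsub hxt
          have l1 : |q x| ≤ M * |κn' n x - κ' x| := hLip _ _
          rw [hκn'eq n x hx.1, hκ'eq x hx.1, hu x hxt] at l1
          show |q x| ≤ M * |z x| + M * |Et n x|
          rw [hEteq n x hxT]
          calc |q x| ≤ M * |z x + E n x| := l1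
            _ ≤ M * (|z x| + |E n x|) :=
                mul_le_mul_of_nonneg_left (abs_add_le _ _) hM
            _ = M * |z x| + M * |E n x| := by ring
        have h3 : ∫ s in (0:ℝ)..r, (M * |z s| + M * |Et n s|) = W r + Bf r := by
          rw [hWdef, hBfdef]
          simp only []
          rw [intervalIntegral.integral_add (hWintc.intervalIntegrable _ _)
            (hBintc.intervalIntegrable _ _)]
        linarith
      -- the Gronwall function
      set Φ : ℝ → ℝ := fun r => Bf r - (W r + Bf r) * Real.exp (-M * r) with hΦdef
      set Φ' : ℝ → ℝ := fun r => M * |Et n r| -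
        ((M * |z r| + M * |Et n r|) * Real.exp (-M * r)
          + (W r + Bf r) * (Real.exp (-M * r) * (-M * 1))) with hΦ'def
      have hexp' : ∀ r : ℝ, HasDerivAt (fun y => Real.exp (-M * y))
          (Real.exp (-M * r) * (-M * 1)) r := fun r =>
        ((hasDerivAt_id r).const_mul (-M)).exp
      have hΦ' : ∀ r, HasDerivAt Φ (Φ' r) r := fun r =>
        (hB' r).sub (((hW' r).add (hB' r)).mul (hexp' r))
      have hΦ'c : Continuous Φ' := by
        apply hBintc.sub
        apply ((hWintc.add hBintc).mul
          (Real.continuous_exp.comp (continuous_const.mul continuous_id))).add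
        exact (hWc.add hBc).mul
          ((Real.continuous_exp.comp (continuous_const.mul continuous_id)).mul continuous_const)
      have hFTC : ∫ r in (0:ℝ)..t, Φ' r = Φ t - Φ 0 :=
        intervalIntegral.integral_eq_sub_of_hasDerivAt (fun x _ => hΦ' x)
          (hΦ'c.intervalIntegrable _ _)
      have hΦ'nonneg : ∀ x ∈ Set.Icc (0:ℝ) t, 0 ≤ Φ' x := by
        intro x hx
        have he1 : Real.exp (-M * x) ≤ 1 := by
          rw [Real.exp_le_one_iff]
          have : 0 ≤ M * x := mul_nonneg hM hx.1
          linarith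
        have he0 : 0 < Real.exp (-M * x) := Real.exp_pos _
        have hzv : |z x| ≤ W x + Bf x := hineq x hx
        have h1 : 0 ≤ M * |Et n x| * (1 - Real.exp (-M * x)) :=
          mul_nonneg (mul_nonneg hM (abs_nonneg _)) (by linarith)
        have h2 : 0 ≤ M * ((W x + Bf x) - |z x|) * Real.exp (-M * x) :=
          mul_nonneg (mul_nonneg hM (by linarith)) he0.le
        rw [hΦ'def]
        simp only []
        nlinarith [h1, h2]
      have hΦ0 : Φ 0 = 0 := by
        rw [hΦdef]
        simp only []
        rw [hWdef, hBfdef]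
        simp [intervalIntegral.integral_same]
      have hΦt : 0 ≤ Φ t := by
        have := intervalIntegral.integral_nonneg (μ := volume) ht.1 hΦ'nonneg
        rw [hFTC, hΦ0] at this
        linarith
      -- conclude the Gronwall bound
      have hgron : W t + Bf t ≤ Bf t * Real.exp (M * t) := by
        have hve : (W t + Bf t) * Real.exp (-M * t) ≤ Bf t := by
          rw [hΦdef] at hΦt
          simp only [] at hΦt
          linarith
        have := mul_le_mul_of_nonneg_right hve (Real.exp_pos (M * t)).le
        rw [mul_assoc, ← Real.exp_add] at this
        simp only [neg_mul, neg_add_cancel, Real.exp_zero, mul_one] at this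
        exact this
      have hBfnonneg : 0 ≤ Bf t :=
        intervalIntegral.integral_nonneg ht.1
          (fun x _ => mul_nonneg hM (abs_nonneg _))
      have hexpmono : Real.exp (M * t) ≤ Real.exp (M * T) :=
        Real.exp_le_exp.2 (mul_le_mul_of_nonneg_left ht.2 hM)
      have hzt : |z t| ≤ W t + Bf t := hineq t ⟨ht.1, le_refl t⟩
      have hut : κn n t - κ t = z t + E n t := hu t ⟨ht.1, le_refl t⟩
      calc |κn n t - κ t| = |z t + E n t| := by rw [hut]
        _ ≤ |z t| + |E n t| := abs_add_le _ _
        _ ≤ (W t + Bf t) + |E n t| := by linarith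
        _ ≤ Bf t * Real.exp (M * t) + |E n t| := by linarith
        _ ≤ Real.exp (M * T) * Bf t + |E n t| := by
            have : Bf t * Real.exp (M * t) ≤ Bf t * Real.exp (M * T) :=
              mul_le_mul_of_nonneg_left hexpmono hBfnonneg
            linarith
    -- the bound tends to zero
    have hB0 : Filter.Tendsto (fun n => ∫ s in (0:ℝ)..t, M * |Et n s|) atTop (nhds 0) := by
      have hdct : Filter.Tendsto (fun n => ∫ s in Set.Ioc (0:ℝ) t, M * |Et n s|) atTop
          (nhds (∫ _s in Set.Ioc (0:ℝ) t, (0:ℝ))) := by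
        apply tendsto_integral_of_dominated_convergence (fun _ => M * C)
        · exact fun n => (continuous_const.mul (hEtc n).abs).aestronglyMeasurable.restrict
        · exact (integrableOn_const_iff (C := M * C)).2 (Or.inr measure_Ioc_lt_top)
        · intro n
          filter_upwards [self_mem_ae_restrict measurableSet_Ioc] with s hs
          have hsT : s ∈ Set.Icc (0:ℝ) T := ⟨hs.1.le, hs.2.trans ht.2⟩
          rw [Real.norm_eq_abs, hEteq n s hsT, abs_of_nonneg (mul_nonneg hM (abs_nonneg _))]
          exact mul_le_mul_of_nonneg_left (hEb n s hsT) hM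
        · filter_upwards [self_mem_ae_restrict measurableSet_Ioc] with s hs
          have hsT : s ∈ Set.Icc (0:ℝ) T := ⟨hs.1.le, hs.2.trans ht.2⟩
          have h1 : Filter.Tendsto (fun n => M * |E n s|) atTop (nhds (M * |(0:ℝ)|)) :=
            ((hE0 s hsT).abs).const_mul M
          simp only [abs_zero, mul_zero] at h1
          apply h1.congr
          intro n
          rw [hEteq n s hsT]
      simp only [integral_zero] at hdct
      apply hdct.congr
      intro n
      rw [intervalIntegral.integral_of_le ht.1]
    have hE0t : Filter.Tendsto (fun n => |E n t|) atTop (nhds 0) := by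
      have := (hE0 t ht).abs
      simpa using this
    have hδ : Filter.Tendsto
        (fun n => Real.exp (M * T) * (∫ s in (0:ℝ)..t, M * |Et n s|) + |E n t|) atTop
        (nhds 0) := by
      have := (hB0.const_mul (Real.exp (M * T))).add hE0t
      simpa using this
    have h1 : Filter.Tendsto (fun n => κn n t - κ t) atTop (nhds 0) :=
      squeeze_zero_norm (fun n => by rw [Real.norm_eq_abs]; exact key n) hδ
    have h2 := h1.add_const (κ t)
    simp only [zero_add, sub_add_cancel] at h2
    exact h2
  constructor
  · intro t ht
    exact le_of_eq ((htend t ht).limsup_eq)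
  · intro hpos t ht
    exact ge_of_tendsto (htend t ht) (Filter.Eventually.of_forall fun n => hpos n t ht)
end

section
/- Under the standing assumptions, the value function satisfies Bellman's dynamic programming principle: for every τ > 0 and every k₀ ≥ 0, V(k₀) = sup_{c ∈ Λ(k₀)} { ∫₀^τ e^{−ρt} u(c(t)) dt + e^{−ρτ} V(k(τ; k₀, c)) }. -/
open MeasureTheory

noncomputable section

/-- `k` is the trajectory starting at `k₀` driven by control `c` and production `F`. -/
def SolOn (F : ℝ → ℝ) (k₀ : ℝ) (c k : ℝ → ℝ) : Prop :=
  ContinuousOn k (Set.Ici 0) ∧ k 0 = k₀ ∧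
    ∀ t ≥ (0:ℝ), k t = k₀ + ∫ s in (0:ℝ)..t, (F (k s) - c s)

/-- `c` is an admissible control at initial capital `k₀`. -/
def Adm (F : ℝ → ℝ) (k₀ : ℝ) (c : ℝ → ℝ) : Prop :=
  LocallyIntegrableOn c (Set.Ici 0) ∧
  (∀ᵐ t ∂(volume.restrict (Set.Ici 0)), 0 ≤ c t) ∧
  ∃ k, SolOn F k₀ c k ∧ ∀ t ≥ (0:ℝ), 0 ≤ k t

/-- Intertemporal utility functional. -/
def Util (ρ : ℝ) (u c : ℝ → ℝ) : ℝ :=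
  ∫ t in Set.Ioi (0:ℝ), Real.exp (-ρ * t) * u (c t)

/-- Value function. -/
def Val (F : ℝ → ℝ) (ρ : ℝ) (u : ℝ → ℝ) (k₀ : ℝ) : ℝ :=
  sSup {x | ∃ c, Adm F k₀ c ∧ Util ρ u c = x}

set_option maxHeartbeats 1000000

open Set Filter


def uext (u : ℝ → ℝ) (x : ℝ) : ℝ := u (max x 0)

lemma uext_cont {u : ℝ → ℝ} (hucont : ContinuousOn u (Set.Ici 0)) : Continuous (uext u) :=
  hucont.comp_continuous (continuous_id.max continuous_const) (fun x => Set.mem_Ici.2 (le_max_right _ _))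

lemma uext_nonneg {u : ℝ → ℝ} (humono : StrictMonoOn u (Set.Ici 0)) (hu0 : u 0 = 0) (x : ℝ) :
    0 ≤ uext u x := by
  have := humono.monotoneOn (self_mem_Ici) (le_max_right x 0) (le_max_right x 0)
  simpa [uext, hu0] using this

lemma uext_mono {u : ℝ → ℝ} (humono : StrictMonoOn u (Set.Ici 0)) : Monotone (uext u) := by
  intro x y hxy
  exact humono.monotoneOn (le_max_right x 0) (le_max_right y 0) (max_le_max hxy le_rfl)

lemma uext_of_nonneg {u : ℝ → ℝ} {x : ℝ} (hx : 0 ≤ x) : uext u x = u x := by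
  simp [uext, max_eq_left hx]

lemma uext_concave_bound {u : ℝ → ℝ} (humono : StrictMonoOn u (Set.Ici 0))
    (huconc : ConcaveOn ℝ (Set.Ici 0) u) (hu0 : u 0 = 0)
    {M : ℝ} (hM : 0 < M) (x : ℝ) :
    uext u x ≤ uext u M * (1 + |x| / M) := by
  have hMnn : 0 ≤ uext u M := uext_nonneg humono hu0 M
  have hxabs : max x 0 ≤ |x| := max_le (le_abs_self x) (abs_nonneg x)
  set y := max x 0 with hy
  have hy0 : 0 ≤ y := le_max_right _ _
  have key : u y ≤ uext u M * (1 + y / M) := by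
    rcases le_or_gt y M with h | h
    · have h1 : u y ≤ uext u M := by
        rw [uext_of_nonneg hM.le]
        exact humono.monotoneOn hy0 hM.le h
      nlinarith [div_nonneg hy0 hM.le]
    · -- concavity : u M ≥ (M/y) u y
      have hyM : (0:ℝ) < y := hM.trans h
      have hcon := huconc.2 (mem_Ici.mpr hy0) (mem_Ici.mpr (le_refl (0:ℝ)))
        (show (0:ℝ) ≤ M / y by positivity)
        (show (0:ℝ) ≤ 1 - M / y by
          have : M / y ≤ 1 := (div_le_one hyM).mpr h.le
          linarith)
        (by ring)
      have hpt : (M / y) • y + (1 - M / y) • (0:ℝ) = M := by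
        rw [smul_eq_mul, smul_eq_mul, mul_zero, add_zero, div_mul_cancel₀ M hyM.ne']
      rw [hpt, hu0] at hcon
      -- hcon : (M/y) • u y + (1 - M/y) • 0 ≤ u M
      have hcon' : (M / y) * u y ≤ u M := by simpa using hcon
      have huM : u M = uext u M := (uext_of_nonneg hM.le).symm
      rw [huM] at hcon'
      have h2 : u y ≤ uext u M * (y / M) := by
        rw [div_mul_eq_mul_div, div_le_iff₀ hyM] at hcon'
        rw [mul_div_assoc', le_div_iff₀ hM]
        linarith
      calc u y ≤ uext u M * (y / M) := h2
        _ ≤ uext u M * (1 + y / M) := by nlinarith [div_nonneg hy0 hM.le]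
  calc uext u x = u y := rfl
    _ ≤ uext u M * (1 + y / M) := key
    _ ≤ uext u M * (1 + |x| / M) := by
        have : y / M ≤ |x| / M := by gcongr
        nlinarith
def aseq (ρ δ : ℝ) (u : ℝ → ℝ) (A : ℝ) (n : ℕ) : ℝ :=
  Real.exp (-ρ * n) * uext u (Real.exp (δ * (n + 1))) * (1 + A)

def CB (ρ δ : ℝ) (u : ℝ → ℝ) (A : ℝ) : ℝ := ∑' n : ℕ, aseq ρ δ u A n

lemma aseq_nonneg {ρ δ A : ℝ} {u : ℝ → ℝ} (humono : StrictMonoOn u (Set.Ici 0)) (hu0 : u 0 = 0)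
    (hA : 0 ≤ A) (n : ℕ) : 0 ≤ aseq ρ δ u A n := by
  have h1 : 0 ≤ uext u (Real.exp (δ * (n + 1))) := uext_nonneg humono hu0 _
  have := Real.exp_pos (-ρ * (n:ℝ))
  unfold aseq
  positivity

lemma summable_aseq {u : ℝ → ℝ} (humono : StrictMonoOn u (Set.Ici 0)) (hu0 : u 0 = 0)
    {ρ ε₀ δ A : ℝ} (hρ : 0 < ρ) (hε₀ : 0 < ε₀) (hδ : 0 < δ) (hA : 0 ≤ A)
    (hexp : Filter.Tendsto
      (fun t => Real.exp (ε₀ * t) * Real.exp (-ρ * t) * u (Real.exp (δ * t)))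
      Filter.atTop (nhds 0)) :
    Summable (aseq ρ δ u A) := by
  have h1 : ∀ᶠ t in atTop, Real.exp (ε₀ * t) * Real.exp (-ρ * t) * u (Real.exp (δ * t)) ≤ 1 :=
    hexp.eventually (eventually_le_nhds one_pos)
  obtain ⟨a, ha⟩ := eventually_atTop.1 h1
  set N : ℕ := ⌈max a 0⌉₊ with hN
  have hbound : ∀ t : ℝ, (N:ℝ) ≤ t → u (Real.exp (δ * t)) ≤ Real.exp ((ρ - ε₀) * t) := by
    intro t ht
    have hat : a ≤ t := le_trans (le_trans (le_max_left a 0) (Nat.le_ceil _)) ht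
    have h2 := ha t hat
    have h3 : 0 < Real.exp (ε₀ * t) * Real.exp (-ρ * t) := by positivity
    rw [← le_div_iff₀' h3] at h2
    calc u (Real.exp (δ * t)) ≤ 1 / (Real.exp (ε₀ * t) * Real.exp (-ρ * t)) := h2
      _ = Real.exp ((ρ - ε₀) * t) := by
          rw [← Real.exp_add, one_div, ← Real.exp_neg]
          ring_nf
  -- compare with geometric series
  rw [← summable_nat_add_iff N]
  refine Summable.of_nonneg_of_le
    (fun n => aseq_nonneg humono hu0 hA (n + N))
    (f := fun n : ℕ => (1 + A) * Real.exp (ρ - ε₀) * Real.exp (-ε₀) ^ n)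
    (fun n => ?_) ?_
  · 
    set m : ℕ := n + N with hm
    have hmN : (N:ℝ) ≤ (m:ℝ) + 1 := by
      have : (N:ℝ) ≤ (m:ℝ) := by exact_mod_cast Nat.le_add_left N n
      linarith
    have hu1 : u (Real.exp (δ * ((m:ℝ) + 1))) ≤ Real.exp ((ρ - ε₀) * ((m:ℝ) + 1)) :=
      hbound _ hmN
    have huext : uext u (Real.exp (δ * ((m:ℝ) + 1))) = u (Real.exp (δ * ((m:ℝ) + 1))) := by
      simp [uext, max_eq_left (Real.exp_pos _).le]
    have hle : aseq ρ δ u A m ≤ (1 + A) * (Real.exp (-ρ * m) * Real.exp ((ρ - ε₀) * ((m:ℝ) + 1))) := by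
      rw [aseq, huext]
      have h4 : 0 ≤ Real.exp (-ρ * (m:ℝ)) := (Real.exp_pos _).le
      have h5 := mul_le_mul_of_nonneg_left hu1 h4
      nlinarith [h5, hA]
    calc aseq ρ δ u A m ≤ (1 + A) * (Real.exp (-ρ * m) * Real.exp ((ρ - ε₀) * ((m:ℝ) + 1))) := hle
      _ = (1 + A) * Real.exp (ρ - ε₀) * Real.exp (-ε₀ * m) := by
          rw [← Real.exp_add, mul_assoc, ← Real.exp_add]
          ring_nf
      _ ≤ (1 + A) * Real.exp (ρ - ε₀) * Real.exp (-ε₀) ^ n := by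
          have h5 : Real.exp (-ε₀ * (m:ℝ)) ≤ Real.exp (-ε₀) ^ n := by
            rw [← Real.exp_nat_mul]
            apply Real.exp_le_exp.2
            have hnm : (n:ℝ) ≤ (m:ℝ) := by exact_mod_cast Nat.le_add_right n N
            nlinarith
          have h6 : 0 ≤ (1 + A) * Real.exp (ρ - ε₀) := by positivity
          exact mul_le_mul_of_nonneg_left h5 h6
  · exact (summable_geometric_of_lt_one (Real.exp_pos _).le
      (Real.exp_lt_one_iff.2 (by linarith))).mul_left _
lemma integrableOn_Icc_of_loc {c : ℝ → ℝ} (hc : LocallyIntegrableOn c (Set.Ici 0)) {a b : ℝ}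
    (ha : 0 ≤ a) : IntegrableOn c (Icc a b) :=
  hc.integrableOn_compact_subset (fun _ hx => le_trans ha hx.1) isCompact_Icc

lemma intervalIntegrable_of_loc {c : ℝ → ℝ} (hc : LocallyIntegrableOn c (Set.Ici 0)) {a b : ℝ}
    (ha : 0 ≤ a) (hab : a ≤ b) : IntervalIntegrable c volume a b :=
  (intervalIntegrable_iff_integrableOn_Icc_of_le hab).mpr (integrableOn_Icc_of_loc hc ha)

lemma gronwall_sol {F : ℝ → ℝ} {δ Mh : ℝ} (hδ : 0 < δ) (hMh : 0 < Mh)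
    (hFc : Continuous F) (hFsub : ∀ x ≥ (0:ℝ), F x ≤ δ * x + Mh)
    {k₀ : ℝ} (hk₀ : 0 ≤ k₀) {c k : ℝ → ℝ}
    (hcl : LocallyIntegrableOn c (Set.Ici 0))
    (hcnn : ∀ᵐ t ∂(volume.restrict (Set.Ici 0)), 0 ≤ c t)
    (hsol : SolOn F k₀ c k) (hknn : ∀ t ≥ (0:ℝ), 0 ≤ k t) :
    ∀ t ≥ (0:ℝ), k t ≤ (k₀ + Mh / δ) * Real.exp (δ * t)
      ∧ ∫ s in (0:ℝ)..t, c s ≤ (k₀ + Mh / δ) * Real.exp (δ * t) := by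
  set kt : ℝ → ℝ := fun t => k (max t 0) with hkt
  have hktc : Continuous kt :=
    hsol.1.comp_continuous (continuous_id.max continuous_const) (fun x => Set.mem_Ici.2 (le_max_right _ _))
  have hktnn : ∀ t, 0 ≤ kt t := fun t => hknn _ (le_max_right _ _)
  have hkteq : ∀ t ≥ (0:ℝ), kt t = k t := fun t ht => by simp [hkt, max_eq_left ht]
  set ψ : ℝ → ℝ := fun t => ∫ s in (0:ℝ)..t, kt s with hψ
  set φ : ℝ → ℝ := fun t => k₀ + Mh * t + δ * ψ t with hφ
  have hψd : ∀ t : ℝ, HasDerivAt ψ (kt t) t := fun t =>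
    (hktc.integral_hasStrictDerivAt 0 t).hasDerivAt
  have hφd : ∀ t : ℝ, HasDerivAt φ (Mh + δ * kt t) t := by
    intro t
    have h1 : HasDerivAt (fun t : ℝ => k₀ + Mh * t) Mh t := by
      simpa using (hasDerivAt_id t).const_mul Mh |>.const_add k₀
    exact h1.add ((hψd t).const_mul δ)
  -- basic integrability on [0,t]
  have hci : ∀ t ≥ (0:ℝ), IntervalIntegrable c volume 0 t := fun t ht =>
    intervalIntegrable_of_loc hcl le_rfl ht
  have hFi : ∀ t : ℝ, IntervalIntegrable (fun s => F (kt s)) volume 0 t := fun t =>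
    (hFc.comp hktc).intervalIntegrable 0 t
  -- rewrite solution with kt
  have hsol' : ∀ t ≥ (0:ℝ), k t = k₀ + ((∫ s in (0:ℝ)..t, F (kt s)) - ∫ s in (0:ℝ)..t, c s) := by
    intro t ht
    rw [hsol.2.2 t ht]
    congr 1
    rw [← intervalIntegral.integral_sub (hFi t) (hci t ht)]
    apply intervalIntegral.integral_congr
    intro s hs
    rw [uIcc_of_le ht] at hs
    simp [hkteq s hs.1]
  have hcint_nonneg : ∀ t ≥ (0:ℝ), 0 ≤ ∫ s in (0:ℝ)..t, c s := by
    intro t ht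
    apply intervalIntegral.integral_nonneg_of_ae_restrict ht
    exact ae_restrict_of_ae_restrict_of_subset (Icc_subset_Ici_self) hcnn
  have hFle : ∀ t ≥ (0:ℝ), (∫ s in (0:ℝ)..t, F (kt s)) ≤ Mh * t + δ * ψ t := by
    intro t ht
    have : (∫ s in (0:ℝ)..t, F (kt s)) ≤ ∫ s in (0:ℝ)..t, (δ * kt s + Mh) := by
      apply intervalIntegral.integral_mono_on ht (hFi t)
        (((continuous_const.mul hktc).add continuous_const).intervalIntegrable 0 t)
      intro s _
      exact hFsub (kt s) (hktnn s)
    calc (∫ s in (0:ℝ)..t, F (kt s)) ≤ ∫ s in (0:ℝ)..t, (δ * kt s + Mh) := this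
      _ = δ * ψ t + Mh * t := by
          rw [intervalIntegral.integral_add ((hktc.intervalIntegrable 0 t).const_mul δ)
            (intervalIntegrable_const), intervalIntegral.integral_const_mul,
            intervalIntegral.integral_const]
          simp [hψ]; ring
      _ = Mh * t + δ * ψ t := by ring
  have hkle : ∀ t ≥ (0:ℝ), k t ≤ φ t := by
    intro t ht
    rw [hsol' t ht, hφ]
    have := hFle t ht
    have := hcint_nonneg t ht
    simp only []
    linarith
  have hcle : ∀ t ≥ (0:ℝ), (∫ s in (0:ℝ)..t, c s) ≤ φ t := by
    intro t ht
    have h1 := hsol' t ht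
    have h2 := hknn t ht
    have := hFle t ht
    simp only [hφ]
    linarith
  have hφnn : ∀ t ≥ (0:ℝ), 0 ≤ φ t := by
    intro t ht
    have := hkle t ht
    have := hknn t ht
    linarith
  -- Gronwall
  have hφle : ∀ t ≥ (0:ℝ), φ t ≤ (k₀ + Mh / δ) * Real.exp (δ * t) := by
    intro t ht
    have hG := norm_le_gronwallBound_of_norm_deriv_right_le (f := φ)
      (f' := fun x => Mh + δ * kt x) (δ := k₀) (K := δ) (ε := Mh) (a := 0) (b := t)
      (fun x _ => (hφd x).continuousAt.continuousWithinAt)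
      (fun x _ => (hφd x).hasDerivWithinAt)
      (by
        have : φ 0 = k₀ := by simp [hφ, hψ]
        rw [this, Real.norm_eq_abs, abs_of_nonneg hk₀])
      (by
        intro x hx
        have hx0 : (0:ℝ) ≤ x := hx.1
        have h1 : kt x ≤ φ x := by rw [hkteq x hx0]; exact hkle x hx0
        have h2 : 0 ≤ φ x := hφnn x hx0
        rw [Real.norm_eq_abs, Real.norm_eq_abs, abs_of_nonneg h2,
          abs_of_nonneg (by nlinarith [hktnn x] : (0:ℝ) ≤ Mh + δ * kt x)]
        nlinarith)
      t ⟨ht, le_rfl⟩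
    rw [Real.norm_eq_abs, abs_of_nonneg (hφnn t ht)] at hG
    calc φ t ≤ gronwallBound k₀ δ Mh (t - 0) := hG
      _ ≤ (k₀ + Mh / δ) * Real.exp (δ * t) := by
          rw [gronwallBound_of_K_ne_0 hδ.ne', sub_zero]
          have he : (1:ℝ) ≤ Real.exp (δ * t) := by
            rw [Real.one_le_exp_iff]; positivity
          have : 0 < Mh / δ := by positivity
          nlinarith
  exact fun t ht => ⟨le_trans (hkle t ht) (hφle t ht), le_trans (hcle t ht) (hφle t ht)⟩
section Core
variable {F u : ℝ → ℝ} {ρ ε₀ δ Mh : ℝ}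

lemma util_core
    (hρ : 0 < ρ) (hε₀ : 0 < ε₀) (hδ : 0 < δ) (hMh : 0 < Mh)
    (hFc : Continuous F) (hFsub : ∀ x ≥ (0:ℝ), F x ≤ δ * x + Mh)
    (hucont : ContinuousOn u (Set.Ici 0)) (humono : StrictMonoOn u (Set.Ici 0))
    (huconc : ConcaveOn ℝ (Set.Ici 0) u) (hu0 : u 0 = 0)
    (hexp : Filter.Tendsto
      (fun t => Real.exp (ε₀ * t) * Real.exp (-ρ * t) * u (Real.exp (δ * t)))
      Filter.atTop (nhds 0))
    {k₀ : ℝ} (hk₀ : 0 ≤ k₀) {c k : ℝ → ℝ}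
    (hcl : LocallyIntegrableOn c (Set.Ici 0))
    (hcnn : ∀ᵐ t ∂(volume.restrict (Set.Ici 0)), 0 ≤ c t)
    (hsol : SolOn F k₀ c k) (hknn : ∀ t ≥ (0:ℝ), 0 ≤ k t) :
    IntegrableOn (fun t => Real.exp (-ρ * t) * uext u (c t)) (Set.Ioi 0) ∧
      (∫ t in Set.Ioi (0:ℝ), Real.exp (-ρ * t) * uext u (c t)) ≤ CB ρ δ u (k₀ + Mh / δ) := by
  set A : ℝ := k₀ + Mh / δ with hAdef
  have hA : 0 ≤ A := by
    rw [hAdef]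
    positivity
  have hsum : Summable (aseq ρ δ u A) := summable_aseq humono hu0 hρ hε₀ hδ hA hexp
  set g : ℝ → ℝ := fun t => Real.exp (-ρ * t) * uext u (c t) with hgdef
  have hgnn : ∀ t, 0 ≤ g t := fun t =>
    mul_nonneg (Real.exp_pos _).le (uext_nonneg humono hu0 _)
  -- measurability
  have hcm : AEStronglyMeasurable c (volume.restrict (Set.Ioi 0)) :=
    hcl.aestronglyMeasurable.mono_measure
      (Measure.restrict_mono Set.Ioi_subset_Ici_self le_rfl)
  have hgm : AEStronglyMeasurable g (volume.restrict (Set.Ioi 0)) :=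
    ((Real.continuous_exp.comp (continuous_const.mul continuous_id)).aestronglyMeasurable).mul
      ((uext_cont hucont).comp_aestronglyMeasurable hcm)
  -- blockwise bound
  have hgron := gronwall_sol hδ hMh hFc hFsub hk₀ hcl hcnn hsol hknn
  have hblock : ∀ n : ℕ, (∫⁻ t in Set.Ico (n:ℝ) (n+1), ENNReal.ofReal (g t))
      ≤ ENNReal.ofReal (aseq ρ δ u A n) := by
    intro n
    set M : ℝ := Real.exp (δ * ((n:ℝ) + 1)) with hMdef
    have hM : 0 < M := Real.exp_pos _
    set uM : ℝ := uext u M with huMdef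
    have huMnn : 0 ≤ uM := uext_nonneg humono hu0 _
    set bnd : ℝ → ℝ := fun t =>
      Real.exp (-ρ * (n:ℝ)) * uM + (Real.exp (-ρ * (n:ℝ)) * uM / M) * |c t| with hbnd
    have hbnn : ∀ t, 0 ≤ bnd t := by
      intro t
      have h1 : (0:ℝ) ≤ Real.exp (-ρ * (n:ℝ)) := (Real.exp_pos _).le
      have h2 : (0:ℝ) ≤ |c t| := abs_nonneg _
      positivity
    have hpt : ∀ t ∈ Set.Ico (n:ℝ) (n+1), g t ≤ bnd t := by
      intro t ht
      have h1 : Real.exp (-ρ * t) ≤ Real.exp (-ρ * (n:ℝ)) := by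
        apply Real.exp_le_exp.2
        nlinarith [ht.1]
      have h2 : uext u (c t) ≤ uM * (1 + |c t| / M) :=
        uext_concave_bound humono huconc hu0 hM (c t)
      have h3 : 0 ≤ uext u (c t) := uext_nonneg humono hu0 _
      have h4 : g t ≤ Real.exp (-ρ * (n:ℝ)) * (uM * (1 + |c t| / M)) :=
        mul_le_mul h1 h2 h3 (Real.exp_pos _).le
      calc g t ≤ Real.exp (-ρ * (n:ℝ)) * (uM * (1 + |c t| / M)) := h4
        _ = bnd t := by simp only [hbnd]; ring
    -- integrability of c on the block
    have hcIcc : IntegrableOn c (Set.Icc (0:ℝ) ((n:ℝ)+1)) := integrableOn_Icc_of_loc hcl le_rfl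
    have hcIco : IntegrableOn c (Set.Ico (n:ℝ) ((n:ℝ)+1)) := by
      apply (integrableOn_Icc_of_loc hcl (by positivity : (0:ℝ) ≤ (n:ℝ))).mono_set
      exact Set.Ico_subset_Icc_self
    have hbint : IntegrableOn bnd (Set.Ico (n:ℝ) ((n:ℝ)+1)) := by
      apply Integrable.add (integrableOn_const (by
        rw [Real.volume_Ico]; exact ENNReal.ofReal_ne_top))
      exact (hcIco.abs).const_mul _
    calc (∫⁻ t in Set.Ico (n:ℝ) (n+1), ENNReal.ofReal (g t))
        ≤ ∫⁻ t in Set.Ico (n:ℝ) (n+1), ENNReal.ofReal (bnd t) := by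
          apply lintegral_mono_ae
          rw [ae_restrict_iff' measurableSet_Ico]
          exact ae_of_all _ fun t ht => ENNReal.ofReal_le_ofReal (hpt t ht)
      _ = ENNReal.ofReal (∫ t in Set.Ico (n:ℝ) (n+1), bnd t) :=
          (ofReal_integral_eq_lintegral_ofReal hbint (ae_of_all _ hbnn)).symm
      _ ≤ ENNReal.ofReal (aseq ρ δ u A n) := by
          apply ENNReal.ofReal_le_ofReal
          -- compute the integral of bnd
          have habs : (∫ t in Set.Ico (n:ℝ) (n+1), |c t|) ≤ A * M := by
            have hsub : Set.Ico (n:ℝ) ((n:ℝ)+1) ⊆ Set.Icc (0:ℝ) ((n:ℝ)+1) := by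
              intro x hx
              exact ⟨le_trans (by positivity) hx.1, hx.2.le⟩
            have h1 : (∫ t in Set.Ico (n:ℝ) (n+1), |c t|) ≤
                ∫ t in Set.Icc (0:ℝ) ((n:ℝ)+1), |c t| := by
              apply setIntegral_mono_set hcIcc.abs
                (ae_of_all _ fun t => abs_nonneg _)
                (HasSubset.Subset.eventuallyLE hsub)
            have h2 : (∫ t in Set.Icc (0:ℝ) ((n:ℝ)+1), |c t|) =
                ∫ t in Set.Icc (0:ℝ) ((n:ℝ)+1), c t := by
              apply setIntegral_congr_ae measurableSet_Icc
              have := (ae_restrict_iff' measurableSet_Ici).1 hcnn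
              filter_upwards [this] with t h3 h4
              exact abs_of_nonneg (h3 (le_trans (by positivity) h4.1))
            have h3 : (∫ t in Set.Icc (0:ℝ) ((n:ℝ)+1), c t) = ∫ s in (0:ℝ)..((n:ℝ)+1), c s := by
              rw [MeasureTheory.integral_Icc_eq_integral_Ioc,
                intervalIntegral.integral_of_le (by positivity)]
            have h4 := (hgron ((n:ℝ)+1) (by positivity)).2
            rw [h2, h3] at h1
            calc (∫ t in Set.Ico (n:ℝ) (n+1), |c t|) ≤ ∫ s in (0:ℝ)..((n:ℝ)+1), c s := h1
              _ ≤ A * Real.exp (δ * ((n:ℝ)+1)) := by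
                  simpa [hAdef, mul_comm] using h4
              _ = A * M := by rw [hMdef]
          have hvol : (volume (Set.Ico (n:ℝ) ((n:ℝ)+1))).toReal = 1 := by
            rw [Real.volume_Ico]
            simp
          simp only [hbnd]
          rw [integral_add (show Integrable (fun _ => Real.exp (-ρ * (n:ℝ)) * uM) (volume.restrict (Set.Ico (n:ℝ) ((n:ℝ)+1))) from integrableOn_const (by
              rw [Real.volume_Ico]; exact ENNReal.ofReal_ne_top)) (show Integrable (fun t => Real.exp (-ρ * (n:ℝ)) * uM / M * |c t|) (volume.restrict (Set.Ico (n:ℝ) ((n:ℝ)+1))) from (hcIco.abs).const_mul _)]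
          rw [setIntegral_const, measureReal_def, hvol, integral_const_mul]
          have hco : Real.exp (-ρ * (n:ℝ)) * uM / M * (∫ t in Set.Ico (n:ℝ) (n+1), |c t|)
              ≤ Real.exp (-ρ * (n:ℝ)) * uM / M * (A * M) := by
            apply mul_le_mul_of_nonneg_left habs
            positivity
          have : Real.exp (-ρ * (n:ℝ)) * uM / M * (A * M) = Real.exp (-ρ * (n:ℝ)) * uM * A := by
            field_simp
          rw [this] at hco
          calc (1:ℝ) • (Real.exp (-ρ * (n:ℝ)) * uM) +
                Real.exp (-ρ * (n:ℝ)) * uM / M * (∫ t in Set.Ico (n:ℝ) (n+1), |c t|)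
              ≤ Real.exp (-ρ * (n:ℝ)) * uM + Real.exp (-ρ * (n:ℝ)) * uM * A := by
                rw [one_smul]; linarith
            _ = aseq ρ δ u A n := by rw [aseq, huMdef, hMdef]; ring
  -- covering
  have hcover : (∫⁻ t in Set.Ioi (0:ℝ), ENNReal.ofReal (g t)) ≤ ENNReal.ofReal (CB ρ δ u A) := by
    have hsub : Set.Ioi (0:ℝ) ⊆ ⋃ n : ℕ, Set.Ico (n:ℝ) ((n:ℝ)+1) := by
      intro t ht
      refine Set.mem_iUnion.2 ⟨⌊t⌋₊, ⟨Nat.floor_le (le_of_lt ht), Nat.lt_floor_add_one t⟩⟩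
    calc (∫⁻ t in Set.Ioi (0:ℝ), ENNReal.ofReal (g t))
        ≤ ∫⁻ t in ⋃ n : ℕ, Set.Ico (n:ℝ) ((n:ℝ)+1), ENNReal.ofReal (g t) :=
          lintegral_mono_set hsub
      _ ≤ ∑' n : ℕ, ∫⁻ t in Set.Ico (n:ℝ) ((n:ℝ)+1), ENNReal.ofReal (g t) :=
          lintegral_iUnion_le _ _
      _ ≤ ∑' n : ℕ, ENNReal.ofReal (aseq ρ δ u A n) := ENNReal.tsum_le_tsum hblock
      _ = ENNReal.ofReal (CB ρ δ u A) :=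
          (ENNReal.ofReal_tsum_of_nonneg (aseq_nonneg humono hu0 hA) hsum).symm
  have hint : IntegrableOn g (Set.Ioi (0:ℝ)) := by
    refine ⟨hgm, ?_⟩
    rw [hasFiniteIntegral_iff_norm]
    have : ∀ t, ENNReal.ofReal ‖g t‖ = ENNReal.ofReal (g t) := fun t => by
      rw [Real.norm_eq_abs, abs_of_nonneg (hgnn t)]
    simp_rw [this]
    exact lt_of_le_of_lt hcover ENNReal.ofReal_lt_top
  refine ⟨hint, ?_⟩
  have hCBnn : 0 ≤ CB ρ δ u A := tsum_nonneg (aseq_nonneg humono hu0 hA)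
  rw [integral_eq_lintegral_of_nonneg_ae (ae_of_all _ hgnn) hgm]
  calc (∫⁻ t in Set.Ioi (0:ℝ), ENNReal.ofReal (g t)).toReal
      ≤ (ENNReal.ofReal (CB ρ δ u A)).toReal :=
        ENNReal.toReal_mono ENNReal.ofReal_ne_top hcover
    _ = CB ρ δ u A := ENNReal.toReal_ofReal hCBnn

end Core
section Shift

lemma ae_shift {P : ℝ → Prop} (τ : ℝ)
    (h : ∀ᵐ t ∂(volume.restrict (Set.Ici 0)), P t) :
    ∀ᵐ t ∂(volume.restrict (Set.Ici 0)), (t + τ) ∈ Set.Ici (0:ℝ) → P (t + τ) := by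
  rw [ae_restrict_iff' measurableSet_Ici] at h ⊢
  have h2 : ∀ᵐ t ∂(volume : Measure ℝ), ((t + τ) ∈ Set.Ici (0:ℝ) → P (t + τ)) :=
    (measurePreserving_add_right volume τ).quasiMeasurePreserving.ae h
  filter_upwards [h2] with t ht _
  exact ht

lemma locint_shift {c : ℝ → ℝ} (hcl : LocallyIntegrableOn c (Set.Ici 0)) {τ : ℝ} (hτ : 0 ≤ τ) :
    LocallyIntegrableOn (fun t => c (t + τ)) (Set.Ici 0) := by
  rw [locallyIntegrableOn_iff isClosed_Ici.isLocallyClosed]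
  intro K hK hKc
  obtain ⟨r, hr⟩ := (Metric.isBounded_iff_subset_closedBall 0).1 hKc.isBounded
  have hKsub : K ⊆ Set.Icc (0:ℝ) r := by
    intro x hx
    have h1 := hr hx
    rw [Metric.closedBall, Set.mem_setOf_eq, Real.dist_eq, sub_zero] at h1
    exact ⟨hK hx, le_trans (le_abs_self x) h1⟩
  apply IntegrableOn.mono_set _ hKsub
  rw [integrableOn_Icc_iff_integrableOn_Ioc]
  rcases le_or_gt 0 r with h0r | h0r
  · have h1 : IntervalIntegrable c volume τ (r + τ) :=
      intervalIntegrable_of_loc hcl hτ (by linarith)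
    have h2 := h1.comp_add_right τ
    simpa using (intervalIntegrable_iff_integrableOn_Ioc_of_le h0r).1 (by simpa using h2)
  · rw [Set.Ioc_eq_empty (by linarith)]
    exact integrableOn_empty

lemma sol_shift {F : ℝ → ℝ} (hFc : Continuous F) {k₀ : ℝ} {c k : ℝ → ℝ}
    (hcl : LocallyIntegrableOn c (Set.Ici 0)) (hsol : SolOn F k₀ c k) {τ : ℝ} (hτ : 0 ≤ τ) :
    SolOn F (k τ) (fun t => c (t + τ)) (fun t => k (t + τ)) := by
  have hmaps : Set.MapsTo (fun t : ℝ => t + τ) (Set.Ici 0) (Set.Ici 0) := by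
    intro x hx
    simp only [Set.mem_Ici] at *
    linarith
  refine ⟨hsol.1.comp ((continuous_id.add continuous_const).continuousOn) hmaps, by simp, ?_⟩
  intro t ht
  have hFki : ∀ a b : ℝ, 0 ≤ a → 0 ≤ b →
      IntervalIntegrable (fun s => F (k s) - c s) volume a b := by
    intro a b ha hb
    rcases le_total a b with hab | hab
    · apply IntervalIntegrable.sub
      · apply ContinuousOn.intervalIntegrable
        apply (hFc.comp_continuousOn hsol.1).mono
        rw [Set.uIcc_of_le hab]
        intro x hx; exact le_trans ha hx.1
      · exact intervalIntegrable_of_loc hcl ha hab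
    · apply IntervalIntegrable.symm
      apply IntervalIntegrable.sub
      · apply ContinuousOn.intervalIntegrable
        apply (hFc.comp_continuousOn hsol.1).mono
        rw [Set.uIcc_of_le hab]
        intro x hx; exact le_trans hb hx.1
      · exact intervalIntegrable_of_loc hcl hb hab
  have h1 : k (t + τ) = k₀ + ∫ s in (0:ℝ)..(t + τ), (F (k s) - c s) :=
    hsol.2.2 (t + τ) (by linarith)
  have h2 : k τ = k₀ + ∫ s in (0:ℝ)..τ, (F (k s) - c s) := hsol.2.2 τ hτ
  have h3 : (∫ s in (0:ℝ)..τ, (F (k s) - c s)) + (∫ s in τ..(t + τ), (F (k s) - c s))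
      = ∫ s in (0:ℝ)..(t + τ), (F (k s) - c s) :=
    intervalIntegral.integral_add_adjacent_intervals (hFki 0 τ le_rfl hτ)
      (hFki τ (t + τ) hτ (by linarith))
  have h4 : (∫ s in (0:ℝ)..t, (F (k (s + τ)) - c (s + τ)))
      = ∫ s in τ..(t + τ), (F (k s) - c s) := by
    have := intervalIntegral.integral_comp_add_right (a := (0:ℝ)) (b := t)
      (fun s => F (k s) - c s) τ
    simpa using this
  show k (t + τ) = k τ + ∫ s in (0:ℝ)..t, (F (k (s + τ)) - c (s + τ))
  rw [h4, h1, h2, ← h3]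
  ring

end Shift
section Split
variable {F u : ℝ → ℝ} {ρ ε₀ δ Mh : ℝ}

lemma util_eq {c : ℝ → ℝ} (hcnn : ∀ᵐ t ∂(volume.restrict (Set.Ici 0)), 0 ≤ c t) :
    Util ρ u c = ∫ t in Set.Ioi (0:ℝ), Real.exp (-ρ * t) * uext u (c t) := by
  apply integral_congr_ae
  have h1 : ∀ᵐ t ∂(volume.restrict (Set.Ioi (0:ℝ))), 0 ≤ c t :=
    ae_restrict_of_ae_restrict_of_subset Set.Ioi_subset_Ici_self hcnn
  filter_upwards [h1] with t ht
  rw [uext_of_nonneg ht]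

lemma util_split
    (hρ : 0 < ρ) (hε₀ : 0 < ε₀) (hδ : 0 < δ) (hMh : 0 < Mh)
    (hFc : Continuous F) (hFsub : ∀ x ≥ (0:ℝ), F x ≤ δ * x + Mh)
    (hucont : ContinuousOn u (Set.Ici 0)) (humono : StrictMonoOn u (Set.Ici 0))
    (huconc : ConcaveOn ℝ (Set.Ici 0) u) (hu0 : u 0 = 0)
    (hexp : Filter.Tendsto
      (fun t => Real.exp (ε₀ * t) * Real.exp (-ρ * t) * u (Real.exp (δ * t)))
      Filter.atTop (nhds 0))
    {k₀ : ℝ} (hk₀ : 0 ≤ k₀) {c k : ℝ → ℝ}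
    (hcl : LocallyIntegrableOn c (Set.Ici 0))
    (hcnn : ∀ᵐ t ∂(volume.restrict (Set.Ici 0)), 0 ≤ c t)
    (hsol : SolOn F k₀ c k) (hknn : ∀ t ≥ (0:ℝ), 0 ≤ k t) {τ : ℝ} (hτ : 0 < τ) :
    Util ρ u c = (∫ t in (0:ℝ)..τ, Real.exp (-ρ * t) * u (c t))
      + Real.exp (-ρ * τ) * Util ρ u (fun s => c (s + τ)) := by
  set g : ℝ → ℝ := fun t => Real.exp (-ρ * t) * uext u (c t) with hgdef
  have hint : IntegrableOn g (Set.Ioi 0) :=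
    (util_core hρ hε₀ hδ hMh hFc hFsub hucont humono huconc hu0 hexp hk₀ hcl hcnn hsol hknn).1
  -- ae nonneg for shifted control
  have hcnn' : ∀ᵐ t ∂(volume.restrict (Set.Ici 0)), 0 ≤ c (t + τ) := by
    filter_upwards [ae_shift τ hcnn, ae_restrict_mem measurableSet_Ici] with t h1 h2
    exact h1 (by simp only [Set.mem_Ici] at *; linarith)
  -- split the domain
  have hsplit : (∫ t in Set.Ioi (0:ℝ), g t)
      = (∫ t in Set.Ioc (0:ℝ) τ, g t) + ∫ t in Set.Ioi τ, g t := by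
    rw [← setIntegral_union (Set.Ioc_disjoint_Ioi le_rfl) measurableSet_Ioi
      (hint.mono_set Set.Ioc_subset_Ioi_self)
      (hint.mono_set (fun x hx => lt_trans hτ hx)),
      Set.Ioc_union_Ioi_eq_Ioi hτ.le]
  have hA : (∫ t in Set.Ioc (0:ℝ) τ, g t) = ∫ t in (0:ℝ)..τ, Real.exp (-ρ * t) * u (c t) := by
    rw [intervalIntegral.integral_of_le hτ.le]
    apply setIntegral_congr_ae measurableSet_Ioc
    filter_upwards [(ae_restrict_iff' measurableSet_Ici).1 hcnn] with t h1 h2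
    rw [hgdef]
    simp only []
    rw [uext_of_nonneg (h1 (le_of_lt h2.1))]
  have hB : Util ρ u (fun s => c (s + τ)) = Real.exp (ρ * τ) * ∫ t in Set.Ioi τ, g t := by
    rw [util_eq hcnn']
    have h1 : (∫ s in Set.Ioi (0:ℝ), Real.exp (-ρ * s) * uext u (c (s + τ)))
        = ∫ s in Set.Ioi (0:ℝ), Real.exp (ρ * τ) * g (s + τ) := by
      apply setIntegral_congr_ae measurableSet_Ioi
      apply ae_of_all
      intro s _
      rw [hgdef]
      simp only []
      rw [← mul_assoc, ← Real.exp_add]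
      ring_nf
    rw [h1, integral_const_mul]
    congr 1
    have h2 : ((fun x : ℝ => x + τ) ⁻¹' (Set.Ioi τ)) = Set.Ioi (0:ℝ) := by
      ext x
      simp [Set.mem_Ioi]
    rw [← h2]
    exact (measurePreserving_add_right volume τ).setIntegral_preimage_emb
      (measurableEmbedding_addRight τ) g (Set.Ioi τ)
  have hC : (∫ t in Set.Ioi τ, g t) = Real.exp (-ρ * τ) * Util ρ u (fun s => c (s + τ)) := by
    rw [hB, ← mul_assoc, ← Real.exp_add]
    norm_num
  rw [util_eq hcnn, hsplit, hA, hC]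

end Split
section Glue

lemma ae_ne_vol (τ : ℝ) : ∀ᵐ t ∂(volume : Measure ℝ), t ≠ τ := by
  refine ae_iff.2 ?_
  have : {a : ℝ | ¬a ≠ τ} = {τ} := by ext a; simp
  rw [this]
  exact measure_singleton τ

lemma glue_all {F : ℝ → ℝ} (hFc : Continuous F) {k₀ τ : ℝ} (hτ : 0 < τ)
    {c k c' k' : ℝ → ℝ}
    (hcl : LocallyIntegrableOn c (Set.Ici 0))
    (hcnn : ∀ᵐ t ∂(volume.restrict (Set.Ici 0)), 0 ≤ c t)
    (hsol : SolOn F k₀ c k) (hknn : ∀ t ≥ (0:ℝ), 0 ≤ k t)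
    (hcl' : LocallyIntegrableOn c' (Set.Ici 0))
    (hcnn' : ∀ᵐ t ∂(volume.restrict (Set.Ici 0)), 0 ≤ c' t)
    (hsol' : SolOn F (k τ) c' k') (hknn' : ∀ t ≥ (0:ℝ), 0 ≤ k' t) :
    LocallyIntegrableOn (fun t => if t < τ then c t else c' (t - τ)) (Set.Ici 0) ∧
    (∀ᵐ t ∂(volume.restrict (Set.Ici 0)), 0 ≤ (if t < τ then c t else c' (t - τ))) ∧
    SolOn F k₀ (fun t => if t < τ then c t else c' (t - τ))
      (fun t => if t ≤ τ then k (max t 0) else k' (max (t - τ) 0)) ∧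
    (∀ t ≥ (0:ℝ), 0 ≤ (if t ≤ τ then k (max t 0) else k' (max (t - τ) 0))) := by
  set c'' : ℝ → ℝ := fun t => if t < τ then c t else c' (t - τ) with hc''def
  set k'' : ℝ → ℝ := fun t => if t ≤ τ then k (max t 0) else k' (max (t - τ) 0) with hk''def
  -- (1) local integrability
  have hIoc : ∀ r : ℝ, IntegrableOn c'' (Set.Ioc 0 r) := by
    intro r
    rcases le_or_gt r τ with hrτ | hrτ
    · apply Integrable.congr ((integrableOn_Icc_of_loc hcl le_rfl).mono_set
        Set.Ioc_subset_Icc_self)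
      filter_upwards [ae_restrict_of_ae (ae_ne_vol τ),
        ae_restrict_mem measurableSet_Ioc] with t h1 h2
      have : t < τ := lt_of_le_of_ne (le_trans h2.2 hrτ) h1
      simp [hc''def, this]
    · have hsplit : Set.Ioc (0:ℝ) r = Set.Ioc 0 τ ∪ Set.Ioc τ r :=
        (Set.Ioc_union_Ioc_eq_Ioc hτ.le hrτ.le).symm
      rw [hsplit]
      apply IntegrableOn.union
      · apply Integrable.congr ((integrableOn_Icc_of_loc hcl le_rfl).mono_set
          Set.Ioc_subset_Icc_self)
        filter_upwards [ae_restrict_of_ae (ae_ne_vol τ),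
          ae_restrict_mem measurableSet_Ioc] with t h1 h2
        have : t < τ := lt_of_le_of_ne h2.2 h1
        simp [hc''def, this]
      · have h1 : IntervalIntegrable c' volume 0 (r - τ) :=
          intervalIntegrable_of_loc hcl' le_rfl (by linarith)
        have h2 := h1.comp_sub_right τ
        have h3 : IntegrableOn (fun x => c' (x - τ)) (Set.Ioc τ r) := by
          have h4 : IntervalIntegrable (fun x => c' (x - τ)) volume τ r := by
            simpa using h2
          exact (intervalIntegrable_iff_integrableOn_Ioc_of_le hrτ.le).1 h4
        apply h3.congr_fun _ measurableSet_Ioc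
        intro t ht
        simp [hc''def, not_lt.2 ht.1.le]
  have hc''l : LocallyIntegrableOn c'' (Set.Ici 0) := by
    rw [locallyIntegrableOn_iff isClosed_Ici.isLocallyClosed]
    intro K hK hKc
    obtain ⟨r, hr⟩ := (Metric.isBounded_iff_subset_closedBall 0).1 hKc.isBounded
    have hKsub : K ⊆ Set.Icc (0:ℝ) r := by
      intro x hx
      have h1 := hr hx
      rw [Metric.closedBall, Set.mem_setOf_eq, Real.dist_eq, sub_zero] at h1
      exact ⟨hK hx, le_trans (le_abs_self x) h1⟩
    apply IntegrableOn.mono_set _ hKsub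
    rw [integrableOn_Icc_iff_integrableOn_Ioc]
    exact hIoc r
  -- (2) nonnegativity a.e.
  have hc''nn : ∀ᵐ t ∂(volume.restrict (Set.Ici 0)), 0 ≤ c'' t := by
    have h1 := (ae_restrict_iff' measurableSet_Ici).1 hcnn
    have h2 : ∀ᵐ t ∂(volume : Measure ℝ), (t + -τ) ∈ Set.Ici (0:ℝ) → 0 ≤ c' (t + -τ) :=
      (measurePreserving_add_right volume (-τ)).quasiMeasurePreserving.ae
        ((ae_restrict_iff' measurableSet_Ici).1 hcnn')
    rw [ae_restrict_iff' measurableSet_Ici]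
    filter_upwards [h1, h2] with t hta htb htI
    by_cases hlt : t < τ
    · simpa [hc''def, hlt] using hta htI
    · have h3 : 0 ≤ c' (t - τ) := by
        have h4 : (t + -τ) ∈ Set.Ici (0:ℝ) := by
          simp only [Set.mem_Ici]
          have := not_lt.1 hlt
          linarith
        have := htb h4
        simpa [sub_eq_add_neg] using this
      simpa [hc''def, hlt] using h3
  -- (3) SolOn
  have hkext : Continuous (fun t => k (max t 0)) :=
    hsol.1.comp_continuous (continuous_id.max continuous_const) (fun x => Set.mem_Ici.2 (le_max_right _ _))
  have hk'ext : Continuous (fun t => k' (max (t - τ) 0)) :=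
    hsol'.1.comp_continuous ((continuous_id.sub continuous_const).max continuous_const)
      (fun x => Set.mem_Ici.2 (le_max_right _ _))
  have hk''c : Continuous k'' := by
    apply Continuous.if_le hkext hk'ext continuous_id continuous_const
    intro x hx
    have hxx : x = τ := hx
    subst hxx
    simp only [sub_self, max_self]
    rw [max_eq_left hτ.le, hsol'.2.1]
  have hk''0 : k'' 0 = k₀ := by
    simp [hk''def, hτ.le, hsol.2.1]
  -- integrability of the glued integrand
  have hc''ii : ∀ a b : ℝ, 0 ≤ a → a ≤ b → IntervalIntegrable c'' volume a b :=
    fun a b ha hab => intervalIntegrable_of_loc hc''l ha hab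
  have hFk''ii : ∀ a b : ℝ, IntervalIntegrable (fun s => F (k'' s)) volume a b :=
    fun a b => (hFc.comp hk''c).intervalIntegrable a b
  have hii : ∀ a b : ℝ, 0 ≤ a → a ≤ b →
      IntervalIntegrable (fun s => F (k'' s) - c'' s) volume a b :=
    fun a b ha hab => (hFk''ii a b).sub (hc''ii a b ha hab)
  -- the congruence on [0, x] for x ≤ τ
  have hcongr1 : ∀ x : ℝ, 0 ≤ x → x ≤ τ →
      (∫ s in (0:ℝ)..x, (F (k s) - c s)) = ∫ s in (0:ℝ)..x, (F (k'' s) - c'' s) := by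
    intro x hx hxτ
    apply intervalIntegral.integral_congr_ae
    filter_upwards [ae_ne_vol τ] with s h1 h2
    rw [Set.uIoc_of_le hx] at h2
    have hs0 : 0 < s := h2.1
    have hsτ : s < τ := lt_of_le_of_ne (le_trans h2.2 hxτ) h1
    simp [hc''def, hk''def, hsτ, hsτ.le, max_eq_left hs0.le]
  have hsolOn : SolOn F k₀ c'' k'' := by
    refine ⟨hk''c.continuousOn, hk''0, ?_⟩
    intro t ht
    rcases le_or_gt t τ with htτ | htτ
    · have h1 : k'' t = k t := by simp [hk''def, htτ, max_eq_left ht]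
      rw [h1, hsol.2.2 t ht, hcongr1 t ht htτ]
    · have h1 : k'' t = k' (t - τ) := by
        simp [hk''def, not_le.2 htτ, max_eq_left (by linarith : (0:ℝ) ≤ t - τ)]
      have h2 : k' (t - τ) = k τ + ∫ s in (0:ℝ)..(t - τ), (F (k' s) - c' s) :=
        hsol'.2.2 (t - τ) (by linarith)
      have h3 : (∫ s in (0:ℝ)..(t - τ), (F (k' s) - c' s))
          = ∫ s in τ..t, (F (k' (s - τ)) - c' (s - τ)) := by
        have := intervalIntegral.integral_comp_sub_right (a := τ) (b := t)
          (fun s => F (k' s) - c' s) τ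
        simpa using this.symm
      have h4 : (∫ s in τ..t, (F (k' (s - τ)) - c' (s - τ)))
          = ∫ s in τ..t, (F (k'' s) - c'' s) := by
        apply intervalIntegral.integral_congr
        intro s hs
        rw [Set.uIcc_of_le htτ.le] at hs
        rcases eq_or_lt_of_le hs.1 with heq | hlt
        · subst heq
          simp [hc''def, hk''def, max_eq_left hτ.le, hsol'.2.1]
        · have hc : c'' s = c' (s - τ) := by simp [hc''def, not_lt.2 hlt.le]
          have hk : k'' s = k' (s - τ) := by
            simp [hk''def, not_le.2 hlt, max_eq_left (by linarith : (0:ℝ) ≤ s - τ)]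
          show F (k' (s - τ)) - c' (s - τ) = F (k'' s) - c'' s
          rw [hc, hk]
      have h5 : k τ = k₀ + ∫ s in (0:ℝ)..τ, (F (k'' s) - c'' s) := by
        rw [hsol.2.2 τ hτ.le, hcongr1 τ hτ.le le_rfl]
      have h6 : (∫ s in (0:ℝ)..τ, (F (k'' s) - c'' s))
          + (∫ s in τ..t, (F (k'' s) - c'' s)) = ∫ s in (0:ℝ)..t, (F (k'' s) - c'' s) :=
        intervalIntegral.integral_add_adjacent_intervals (hii 0 τ le_rfl hτ.le)
          (hii τ t hτ.le htτ.le)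
      rw [h1, h2, h3, h4, h5, ← h6]
      ring
  refine ⟨hc''l, hc''nn, hsolOn, ?_⟩
  intro t ht
  rcases le_or_gt t τ with htτ | htτ
  · simp only [hk''def, if_pos htτ]
    exact hknn _ (le_max_right _ _)
  · simp only [hk''def, if_neg (not_le.2 htτ)]
    exact hknn' _ (le_max_right _ _)

end Glue
section Final

lemma const_adm {F : ℝ → ℝ} (hFmono : StrictMono F) (hF0 : F 0 = 0) {k₀ : ℝ} (hk₀ : 0 ≤ k₀) :
    Adm F k₀ (fun _ => F k₀) := by
  refine ⟨(locallyIntegrable_const _).locallyIntegrableOn _, ae_of_all _ (fun t => ?_),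
    fun _ => k₀, ⟨continuousOn_const, rfl, fun t ht => ?_⟩, fun t _ => hk₀⟩
  · rw [← hF0]
    exact hFmono.monotone hk₀
  · simp

lemma CB_mono {ρ ε₀ δ : ℝ} {u : ℝ → ℝ} (humono : StrictMonoOn u (Set.Ici 0)) (hu0 : u 0 = 0)
    (hρ : 0 < ρ) (hε₀ : 0 < ε₀) (hδ : 0 < δ)
    (hexp : Filter.Tendsto
      (fun t => Real.exp (ε₀ * t) * Real.exp (-ρ * t) * u (Real.exp (δ * t)))
      Filter.atTop (nhds 0))
    {A A' : ℝ} (hA : 0 ≤ A) (hAA' : A ≤ A') :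
    CB ρ δ u A ≤ CB ρ δ u A' := by
  have hA' : 0 ≤ A' := le_trans hA hAA'
  apply Summable.tsum_le_tsum _ (summable_aseq humono hu0 hρ hε₀ hδ hA hexp)
    (summable_aseq humono hu0 hρ hε₀ hδ hA' hexp)
  intro n
  unfold aseq
  have h1 : 0 ≤ Real.exp (-ρ * (n:ℝ)) * uext u (Real.exp (δ * ((n:ℝ) + 1))) :=
    mul_nonneg (Real.exp_pos _).le (uext_nonneg humono hu0 _)
  nlinarith

end Final

theorem stmt19 (F u : ℝ → ℝ) (ρ L ε₀ Mh : ℝ)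
    (hρ : 0 < ρ) (hL : 0 < L) (hε₀ : 0 < ε₀) (hMh : 0 < Mh)
    (hF : ContDiff ℝ 1 F) (hFmono : StrictMono F) (hF0 : F 0 = 0)
    (hFsub : ∀ x ≥ (0:ℝ), F x ≤ (L + ε₀) * x + Mh)
    (hucont : ContinuousOn u (Set.Ici 0)) (humono : StrictMonoOn u (Set.Ici 0))
    (huconc : ConcaveOn ℝ (Set.Ici 0) u) (hu0 : u 0 = 0)
    (hexp : Filter.Tendsto
      (fun t => Real.exp (ε₀ * t) * Real.exp (-ρ * t) * u (Real.exp ((L + ε₀) * t)))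
      Filter.atTop (nhds 0)) :
    ∀ τ > (0:ℝ), ∀ k₀ ≥ (0:ℝ),
      Val F ρ u k₀ = sSup {x | ∃ c k : ℝ → ℝ,
        LocallyIntegrableOn c (Set.Ici 0) ∧
        (∀ᵐ t ∂(volume.restrict (Set.Ici 0)), 0 ≤ c t) ∧
        SolOn F k₀ c k ∧ (∀ t ≥ (0:ℝ), 0 ≤ k t) ∧
        x = (∫ t in (0:ℝ)..τ, Real.exp (-ρ * t) * u (c t)) +
              Real.exp (-ρ * τ) * Val F ρ u (k τ)} := by
  intro τ hτ k₀ hk₀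
  set δ : ℝ := L + ε₀ with hδdef
  have hδ : 0 < δ := by rw [hδdef]; linarith
  have hFc : Continuous F := hF.continuous
  -- basic facts about the value function
  have hS₁ne : ∀ k₀' : ℝ, 0 ≤ k₀' →
      Set.Nonempty {x | ∃ c, Adm F k₀' c ∧ Util ρ u c = x} :=
    fun k₀' h => ⟨_, ⟨_, const_adm hFmono hF0 h, rfl⟩⟩
  have hub : ∀ k₀' : ℝ, 0 ≤ k₀' →
      ∀ x ∈ {x | ∃ c, Adm F k₀' c ∧ Util ρ u c = x}, x ≤ CB ρ δ u (k₀' + Mh / δ) := by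
    rintro k₀' h x ⟨c, ⟨hcl, hcnn, k, hsol, hknn⟩, rfl⟩
    rw [util_eq hcnn]
    exact (util_core hρ hε₀ hδ hMh hFc hFsub hucont humono huconc hu0 hexp h
      hcl hcnn hsol hknn).2
  have hbdd : ∀ k₀' : ℝ, 0 ≤ k₀' →
      BddAbove {x | ∃ c, Adm F k₀' c ∧ Util ρ u c = x} :=
    fun k₀' h => ⟨_, hub k₀' h⟩
  have hval_le : ∀ k₀' : ℝ, 0 ≤ k₀' → Val F ρ u k₀' ≤ CB ρ δ u (k₀' + Mh / δ) :=
    fun k₀' h => csSup_le (hS₁ne k₀' h) (hub k₀' h)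
  -- bound on the first piece
  have hfirst : ∀ (k₀' : ℝ), 0 ≤ k₀' → ∀ (c k : ℝ → ℝ),
      LocallyIntegrableOn c (Set.Ici 0) →
      (∀ᵐ t ∂(volume.restrict (Set.Ici 0)), 0 ≤ c t) →
      SolOn F k₀' c k → (∀ t ≥ (0:ℝ), 0 ≤ k t) →
      (∫ t in (0:ℝ)..τ, Real.exp (-ρ * t) * u (c t)) ≤ CB ρ δ u (k₀' + Mh / δ) := by
    intro k₀' h c k hcl hcnn hsol hknn
    have hcore := util_core hρ hε₀ hδ hMh hFc hFsub hucont humono huconc hu0 hexp h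
      hcl hcnn hsol hknn
    have h1 : (∫ t in (0:ℝ)..τ, Real.exp (-ρ * t) * u (c t))
        = ∫ t in Set.Ioc (0:ℝ) τ, Real.exp (-ρ * t) * uext u (c t) := by
      rw [intervalIntegral.integral_of_le hτ.le]
      apply setIntegral_congr_ae measurableSet_Ioc
      filter_upwards [(ae_restrict_iff' measurableSet_Ici).1 hcnn] with t ht h2
      rw [uext_of_nonneg (ht (le_of_lt h2.1))]
    rw [h1]
    calc (∫ t in Set.Ioc (0:ℝ) τ, Real.exp (-ρ * t) * uext u (c t))
        ≤ ∫ t in Set.Ioi (0:ℝ), Real.exp (-ρ * t) * uext u (c t) := by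
          apply setIntegral_mono_set hcore.1
            (ae_of_all _ fun t => mul_nonneg (Real.exp_pos _).le (uext_nonneg humono hu0 _))
            (HasSubset.Subset.eventuallyLE Set.Ioc_subset_Ioi_self)
      _ ≤ CB ρ δ u (k₀' + Mh / δ) := hcore.2
  -- BddAbove of the RHS set
  have hbddS₂ : BddAbove {x | ∃ c k : ℝ → ℝ,
      LocallyIntegrableOn c (Set.Ici 0) ∧
      (∀ᵐ t ∂(volume.restrict (Set.Ici 0)), 0 ≤ c t) ∧
      SolOn F k₀ c k ∧ (∀ t ≥ (0:ℝ), 0 ≤ k t) ∧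
      x = (∫ t in (0:ℝ)..τ, Real.exp (-ρ * t) * u (c t)) +
            Real.exp (-ρ * τ) * Val F ρ u (k τ)} := by
    refine ⟨CB ρ δ u (k₀ + Mh / δ) + Real.exp (-ρ * τ) *
      CB ρ δ u ((k₀ + Mh / δ) * Real.exp (δ * τ) + Mh / δ), ?_⟩
    rintro x ⟨c, k, hcl, hcnn, hsol, hknn, rfl⟩
    have hkτnn : 0 ≤ k τ := hknn τ hτ.le
    have hkτle : k τ ≤ (k₀ + Mh / δ) * Real.exp (δ * τ) :=
      (gronwall_sol hδ hMh hFc hFsub hk₀ hcl hcnn hsol hknn τ hτ.le).1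
    have h2 : Val F ρ u (k τ) ≤ CB ρ δ u ((k₀ + Mh / δ) * Real.exp (δ * τ) + Mh / δ) := by
      apply le_trans (hval_le (k τ) hkτnn)
      apply CB_mono humono hu0 hρ hε₀ hδ hexp
      · have : 0 < Mh / δ := by positivity
        linarith
      · linarith
    have h3 := hfirst k₀ hk₀ c k hcl hcnn hsol hknn
    have h4 : Real.exp (-ρ * τ) * Val F ρ u (k τ) ≤ Real.exp (-ρ * τ) *
        CB ρ δ u ((k₀ + Mh / δ) * Real.exp (δ * τ) + Mh / δ) :=
      mul_le_mul_of_nonneg_left h2 (Real.exp_pos _).le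
    linarith
  -- main equality
  apply le_antisymm
  · show sSup {x | ∃ c, Adm F k₀ c ∧ Util ρ u c = x} ≤ _
    apply csSup_le (hS₁ne k₀ hk₀)
    rintro x ⟨c, ⟨hcl, hcnn, k, hsol, hknn⟩, rfl⟩
    have hkτnn : 0 ≤ k τ := hknn τ hτ.le
    have hcl' := locint_shift hcl hτ.le
    have hcnn' : ∀ᵐ t ∂(volume.restrict (Set.Ici 0)), 0 ≤ c (t + τ) := by
      filter_upwards [ae_shift τ hcnn, ae_restrict_mem measurableSet_Ici] with t h1 h2
      exact h1 (by simp only [Set.mem_Ici] at *; linarith)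
    have hsol' := sol_shift hFc hcl hsol hτ.le
    have hknn' : ∀ t ≥ (0:ℝ), 0 ≤ k (t + τ) := fun t ht => hknn _ (by linarith)
    have hUcτ : Util ρ u (fun s => c (s + τ)) ≤ Val F ρ u (k τ) :=
      le_csSup (hbdd (k τ) hkτnn) ⟨_, ⟨hcl', hcnn', _, hsol', hknn'⟩, rfl⟩
    have hsplit := util_split hρ hε₀ hδ hMh hFc hFsub hucont humono huconc hu0 hexp hk₀
      hcl hcnn hsol hknn hτ
    have hmem : ((∫ t in (0:ℝ)..τ, Real.exp (-ρ * t) * u (c t)) +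
        Real.exp (-ρ * τ) * Val F ρ u (k τ)) ∈ {x | ∃ c k : ℝ → ℝ,
        LocallyIntegrableOn c (Set.Ici 0) ∧
        (∀ᵐ t ∂(volume.restrict (Set.Ici 0)), 0 ≤ c t) ∧
        SolOn F k₀ c k ∧ (∀ t ≥ (0:ℝ), 0 ≤ k t) ∧
        x = (∫ t in (0:ℝ)..τ, Real.exp (-ρ * t) * u (c t)) +
              Real.exp (-ρ * τ) * Val F ρ u (k τ)} :=
      ⟨c, k, hcl, hcnn, hsol, hknn, rfl⟩
    apply le_csSup_of_le hbddS₂ hmem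
    rw [hsplit]
    have h5 : Real.exp (-ρ * τ) * Util ρ u (fun s => c (s + τ)) ≤
        Real.exp (-ρ * τ) * Val F ρ u (k τ) :=
      mul_le_mul_of_nonneg_left hUcτ (Real.exp_pos _).le
    linarith
  · -- RHS ≤ LHS
    have hS₂ne : Set.Nonempty {x | ∃ c k : ℝ → ℝ,
        LocallyIntegrableOn c (Set.Ici 0) ∧
        (∀ᵐ t ∂(volume.restrict (Set.Ici 0)), 0 ≤ c t) ∧
        SolOn F k₀ c k ∧ (∀ t ≥ (0:ℝ), 0 ≤ k t) ∧
        x = (∫ t in (0:ℝ)..τ, Real.exp (-ρ * t) * u (c t)) +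
              Real.exp (-ρ * τ) * Val F ρ u (k τ)} := by
      obtain ⟨hcl, hcnn, kk, hsol, hknn⟩ := const_adm hFmono hF0 hk₀
      exact ⟨_, fun _ => F k₀, kk, hcl, hcnn, hsol, hknn, rfl⟩
    apply csSup_le hS₂ne
    rintro x ⟨c, k, hcl, hcnn, hsol, hknn, rfl⟩
    have hkτnn : 0 ≤ k τ := hknn τ hτ.le
    show _ ≤ Val F ρ u k₀
    refine le_of_forall_pos_le_add ?_
    intro ε hε
    set ε' : ℝ := ε * Real.exp (ρ * τ) with hε'def
    have hε' : 0 < ε' := by positivity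
    have h1 : Val F ρ u (k τ) - ε' < Val F ρ u (k τ) := sub_lt_self _ hε'
    obtain ⟨y, hymem, hy⟩ := exists_lt_of_lt_csSup (hS₁ne (k τ) hkτnn)
      (show Val F ρ u (k τ) - ε' < sSup {x | ∃ c, Adm F (k τ) c ∧ Util ρ u c = x} from h1)
    obtain ⟨c', ⟨h'cl, h'cnn, k', h'sol, h'knn⟩, rfl⟩ := hymem
    obtain ⟨Gcl, Gcnn, Gsol, Gknn⟩ := glue_all hFc hτ hcl hcnn hsol hknn h'cl h'cnn h'sol h'knn
    set c'' : ℝ → ℝ := fun t => if t < τ then c t else c' (t - τ) with hc''def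
    have hUle : Util ρ u c'' ≤ Val F ρ u k₀ :=
      le_csSup (hbdd k₀ hk₀) ⟨c'', ⟨Gcl, Gcnn, _, Gsol, Gknn⟩, rfl⟩
    have hsplit'' := util_split hρ hε₀ hδ hMh hFc hFsub hucont humono huconc hu0 hexp hk₀
      Gcl Gcnn Gsol Gknn hτ
    have hshift_eq : Util ρ u (fun s => c'' (s + τ)) = Util ρ u c' := by
      unfold Util
      apply setIntegral_congr_fun measurableSet_Ioi
      intro s hs
      have h2 : ¬(s + τ < τ) := by
        simp only [Set.mem_Ioi] at hs
        push_neg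
        linarith
      simp [hc''def, h2]
    have hfirst_eq : (∫ t in (0:ℝ)..τ, Real.exp (-ρ * t) * u (c'' t))
        = ∫ t in (0:ℝ)..τ, Real.exp (-ρ * t) * u (c t) := by
      apply intervalIntegral.integral_congr_ae
      filter_upwards [ae_ne_vol τ] with s h1 h2
      rw [Set.uIoc_of_le hτ.le] at h2
      have : s < τ := lt_of_le_of_ne h2.2 h1
      simp [hc''def, this]
    rw [hsplit'', hshift_eq, hfirst_eq] at hUle
    have h6 : Real.exp (-ρ * τ) * Val F ρ u (k τ) ≤
        Real.exp (-ρ * τ) * (Util ρ u c' + ε') := by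
      apply mul_le_mul_of_nonneg_left _ (Real.exp_pos _).le
      linarith
    have h7 : Real.exp (-ρ * τ) * ε' = ε * (Real.exp (-ρ * τ) * Real.exp (ρ * τ)) := by
      rw [hε'def]; ring
    have h8 : Real.exp (-ρ * τ) * Real.exp (ρ * τ) = 1 := by
      rw [← Real.exp_add]; ring_nf; exact Real.exp_zero
    have h9 : Real.exp (-ρ * τ) * ε' ≤ ε := by rw [h7, h8]; linarith
    have h10 : Real.exp (-ρ * τ) * (Util ρ u c' + ε')
        = Real.exp (-ρ * τ) * Util ρ u c' + Real.exp (-ρ * τ) * ε' := by ring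
    linarith
end
end
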